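/- Let f be a finite product f(z) = c·∏ᵢ (aᵢ z + 1)/(z + aᵢ) with c ∈ {-1, 1}, each aᵢ real with |aᵢ| < 1. Then for every ω_p ∈ (0, π), the phase change rate satisfies θ_f'(ω_p) ≤ -|sin(θ_f(ω_p))| / sin(ω_p), with equality when the product has zero or one factor. -/

import Mathlib

open Real Complex

theorem factor_sin_aux (a ω : ℝ) (hω : ω ∈ Set.Ioo 0 π) :
    Real.sin (Complex.arg ((a * Complex.exp (ω * Complex.I) + 1) / (Complex.exp (ω * Complex.I) + a))) =
      (a ^ 2 - 1) * Real.sin ω / ‖Complex.exp (ω * Complex.I) + a‖ ^ 2 := by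
  have hs : Real.sin ω > 0 := Real.sin_pos_of_pos_of_lt_pi hω.1 hω.2
  set E := Complex.exp (ω * Complex.I) with hE
  have hre : E.re = Real.cos ω := by simp [hE]
  have him : E.im = Real.sin ω := by simp [hE]
  have hD : (E + a) ≠ 0 := by
    intro h
    have : (E + (a:ℂ)).im = 0 := by rw [h]; simp
    simp [him] at this
    linarith
  have habsD : ‖E + a‖ ≠ 0 := by simpa using hD
  have hns : Complex.normSq (a * E + 1) = Complex.normSq (E + a) := by
    have := Real.sin_sq_add_cos_sq ω
    simp only [Complex.normSq_apply, Complex.add_re, Complex.add_im, Complex.mul_re,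
      Complex.mul_im, Complex.ofReal_re, Complex.ofReal_im, Complex.one_re, Complex.one_im,
      hre, him]
    linear_combination (a^2-1) * this
  have habs : ‖(a * E + 1) / (E + a)‖ = 1 := by
    rw [norm_div, div_eq_one_iff_eq habsD, Complex.norm_def, Complex.norm_def, hns]
  have hsin := Complex.sin_arg ((a * E + 1) / (E + a))
  rw [habs, div_one] at hsin
  rw [hsin, Complex.div_im, Complex.sq_norm]
  simp only [Complex.add_re, Complex.add_im, Complex.mul_re, Complex.mul_im,
    Complex.ofReal_re, Complex.ofReal_im, Complex.one_re, Complex.one_im, hre, him,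
    Complex.normSq_apply]
  ring

theorem abs_sin_sum_aux {ι : Type*} (s : Finset ι) (x : ι → ℝ) :
    |Real.sin (∑ i ∈ s, x i)| ≤ ∑ i ∈ s, |Real.sin (x i)| := by
  induction s using Finset.cons_induction with
  | empty => simp
  | cons i s hi ih =>
    rw [Finset.sum_cons, Finset.sum_cons, Real.sin_add]
    calc |Real.sin (x i) * Real.cos (∑ j ∈ s, x j) + Real.cos (x i) * Real.sin (∑ j ∈ s, x j)|
        ≤ |Real.sin (x i) * Real.cos (∑ j ∈ s, x j)| + |Real.cos (x i) * Real.sin (∑ j ∈ s, x j)| :=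
          abs_add_le _ _
      _ ≤ |Real.sin (x i)| * 1 + 1 * |Real.sin (∑ j ∈ s, x j)| := by
          rw [abs_mul, abs_mul]
          gcongr <;> first | exact Real.abs_cos_le_one _ | exact abs_nonneg _
      _ ≤ |Real.sin (x i)| + ∑ j ∈ s, |Real.sin (x j)| := by
          rw [mul_one, one_mul]; gcongr

/-- For a finite product of first-order real-pole all-pass factors (times `c = ±1`),
the phase change rate (the sum of the factors' phase change rates) at `ω_p ∈ (0, π)`
is at most `-|sin θ_f(ω_p)|/sin ω_p`, with equality for zero or one factor.  Here
`θ_f(ω_p)` is the argument of the product, obtained as `arg c` plus the sum of the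
arguments of the factors, and each factor's phase change rate is `(aᵢ² - 1)/|e^{jω_p} + aᵢ|²`. -/
theorem stmt_5 (n : ℕ) (c : ℝ) (hc : c = 1 ∨ c = -1) (a : Fin n → ℝ)
    (ha : ∀ i, |a i| < 1) (ωp : ℝ) (hωp : ωp ∈ Set.Ioo 0 π) :
    (∑ i, ((a i) ^ 2 - 1) / ‖Complex.exp (ωp * Complex.I) + a i‖ ^ 2) ≤
        -|Real.sin (Complex.arg (c : ℂ) +
            ∑ i, Complex.arg ((a i * Complex.exp (ωp * Complex.I) + 1) /
              (Complex.exp (ωp * Complex.I) + a i)))| / Real.sin ωp ∧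
      (n ≤ 1 →
        (∑ i, ((a i) ^ 2 - 1) / ‖Complex.exp (ωp * Complex.I) + a i‖ ^ 2) =
          -|Real.sin (Complex.arg (c : ℂ) +
              ∑ i, Complex.arg ((a i * Complex.exp (ωp * Complex.I) + 1) /
                (Complex.exp (ωp * Complex.I) + a i)))| / Real.sin ωp) := by
  have hs : Real.sin ωp > 0 := Real.sin_pos_of_pos_of_lt_pi hωp.1 hωp.2
  set θ : Fin n → ℝ := fun i => Complex.arg ((a i * Complex.exp (ωp * Complex.I) + 1) /
      (Complex.exp (ωp * Complex.I) + a i)) with hθ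
  -- each summand equals sin θ i / sin ωp
  have hterm : ∀ i, ((a i) ^ 2 - 1) / ‖Complex.exp (ωp * Complex.I) + a i‖ ^ 2
      = Real.sin (θ i) / Real.sin ωp := by
    intro i
    rw [hθ, factor_sin_aux (a i) ωp hωp, eq_div_iff hs.ne']
    ring
  have hsum : (∑ i, ((a i) ^ 2 - 1) / ‖Complex.exp (ωp * Complex.I) + a i‖ ^ 2)
      = (∑ i, Real.sin (θ i)) / Real.sin ωp := by
    rw [Finset.sum_div]; exact Finset.sum_congr rfl fun i _ => hterm i
  -- sin θ i ≤ 0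
  have hneg : ∀ i, Real.sin (θ i) ≤ 0 := by
    intro i
    rw [hθ, factor_sin_aux (a i) ωp hωp]
    apply div_nonpos_of_nonpos_of_nonneg
    · have : (a i)^2 < 1 := by
        have := ha i
        nlinarith [abs_nonneg (a i), _root_.sq_abs (a i)]
      nlinarith
    · positivity
  -- |sin (arg c + ∑ θ)| = |sin (∑ θ)|
  have hargc : |Real.sin (Complex.arg (c:ℂ) + ∑ i, θ i)| = |Real.sin (∑ i, θ i)| := by
    rcases hc with h | h <;> subst h
    · norm_num
    · push_cast
      rw [Complex.arg_neg_one, add_comm, Real.sin_add_pi, abs_neg]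
  have hkey : |Real.sin (Complex.arg (c:ℂ) + ∑ i, θ i)| ≤ -∑ i, Real.sin (θ i) := by
    rw [hargc]
    calc |Real.sin (∑ i, θ i)| ≤ ∑ i, |Real.sin (θ i)| := abs_sin_sum_aux _ _
      _ = -∑ i, Real.sin (θ i) := by
          rw [← Finset.sum_neg_distrib]
          exact Finset.sum_congr rfl fun i _ => abs_of_nonpos (hneg i)
  constructor
  · rw [hsum, div_le_div_iff_of_pos_right hs]
    linarith
  · intro hn
    rw [hsum]
    interval_cases n
    · simp
      rcases hc with h | h <;> subst h <;> push_cast <;>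
        simp [Complex.arg_neg_one, Real.sin_pi]
    · rw [Fin.sum_univ_one, Fin.sum_univ_one] at *
      have : |Real.sin (Complex.arg (c:ℂ) + θ 0)| = -Real.sin (θ 0) := by
        rw [hargc, abs_of_nonpos (hneg 0)]
      rw [this]
      ring
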